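/- For every fixed nonnegative integer b, the sums ∑_{j=1}^{b} κ_{m−j} · (b − 1 + κ_{j−1} + κ_{b−j} − κ_b) tend to 0 as m → ∞. -/

import Mathlib

open Finset Filter Topology

/-- The `n`-th harmonic number `H_n = ∑_{i=1}^n 1/i`. -/
noncomputable def H (n : ℕ) : ℝ := ∑ i ∈ Finset.range n, (1 : ℝ) / (i + 1)

/-- `κ_n = 2(n+1)H_n - 4n`, the mean number of key comparisons for QuickSort on `n` keys. -/
noncomputable def κ (n : ℕ) : ℝ := 2 * (n + 1) * H n - 4 * n

/-- The coefficient appearing in the sum. -/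
noncomputable def c (b j : ℕ) : ℝ := (b : ℝ) - 1 + κ (j - 1) + κ (b - j) - κ b

lemma H_succ (n : ℕ) : H (n + 1) = H n + 1 / (n + 1) := by
  simp [H, Finset.sum_range_succ]

lemma sum_kappa (b : ℕ) : 2 * ∑ j ∈ Finset.range b, κ j = (b : ℝ) * κ b - b * (b - 1) := by
  induction b with
  | zero => simp [κ, H]
  | succ b ih =>
    rw [Finset.sum_range_succ, mul_add, ih]
    simp only [κ, H_succ]
    push_cast
    have : (b : ℝ) + 1 ≠ 0 := by positivity
    field_simp
    ring

lemma sum_c (b : ℕ) : ∑ j ∈ Finset.Icc 1 b, c b j = 0 := by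
  rw [← Finset.Ico_add_one_right_eq_Icc, Finset.sum_Ico_eq_sum_range]
  simp only [Nat.add_sub_cancel]
  have h1 : ∀ i ∈ Finset.range b, c b (1 + i)
      = ((b : ℝ) - 1 - κ b + κ i) + κ (b - 1 - i) := by
    intro i hi
    simp only [Finset.mem_range] at hi
    have e1 : 1 + i - 1 = i := by omega
    have e2 : b - (1 + i) = b - 1 - i := by omega
    rw [c, e1, e2]; ring
  rw [Finset.sum_congr rfl h1, Finset.sum_add_distrib,
    Finset.sum_range_reflect (fun i => κ i) b, Finset.sum_add_distrib,
    Finset.sum_const, Finset.card_range, nsmul_eq_mul]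
  have := sum_kappa b
  rcases Nat.eq_zero_or_pos b with hb | hb
  · subst hb; simp
  · have hcast : ((b : ℝ) - 1) = ((b - 1 : ℕ) : ℝ) := by
      push_cast [Nat.cast_sub hb]; ring
    nlinarith [this]

lemma c_reflect (b i : ℕ) (hi : i < b) : c b (b - i) = c b (1 + i) := by
  have e1 : b - i - 1 = b - (1 + i) := by omega
  have e2 : b - (b - i) = i := by omega
  have e3 : 1 + i - 1 = i := by omega
  rw [c, c, e1, e2, e3]; ring

lemma sum_jc (b : ℕ) : ∑ j ∈ Finset.Icc 1 b, (j : ℝ) * c b j = 0 := by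
  rw [← Finset.Ico_add_one_right_eq_Icc, Finset.sum_Ico_eq_sum_range]
  simp only [Nat.add_sub_cancel]
  have hrefl := Finset.sum_range_reflect (fun i => ((1 + i : ℕ) : ℝ) * c b (1 + i)) b
  have h2 : ∑ i ∈ Finset.range b, ((1 + (b - 1 - i) : ℕ) : ℝ) * c b (1 + (b - 1 - i))
      = ∑ i ∈ Finset.range b, (((b : ℝ) + 1) - ((1 + i : ℕ) : ℝ)) * c b (1 + i) := by
    refine Finset.sum_congr rfl fun i hi => ?_
    simp only [Finset.mem_range] at hi
    have e : 1 + (b - 1 - i) = b - i := by omega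
    rw [e, c_reflect b i hi]
    congr 1
    push_cast [Nat.cast_sub (le_of_lt hi)]
    ring
  have h3 : ∑ i ∈ Finset.range b, (((b : ℝ) + 1) - ((1 + i : ℕ) : ℝ)) * c b (1 + i)
      = ((b : ℝ) + 1) * ∑ i ∈ Finset.range b, c b (1 + i)
        - ∑ i ∈ Finset.range b, ((1 + i : ℕ) : ℝ) * c b (1 + i) := by
    rw [Finset.mul_sum, ← Finset.sum_sub_distrib]
    exact Finset.sum_congr rfl fun i _ => by ring
  have h4 : ∑ i ∈ Finset.range b, c b (1 + i) = 0 := by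
    have := sum_c b
    rwa [← Finset.Ico_add_one_right_eq_Icc, Finset.sum_Ico_eq_sum_range, Nat.add_sub_cancel] at this
  rw [h2, h3, h4] at hrefl
  linarith [hrefl]

lemma H_add (n j : ℕ) : H (n + j) = H n + ∑ i ∈ Finset.range j, (1 : ℝ) / (n + i + 1) := by
  simp only [H, Finset.sum_range_add]
  congr 1
  refine Finset.sum_congr rfl fun i _ => ?_
  push_cast
  ring

lemma key (n j : ℕ) :
    κ n - κ (n + j) + j * (2 * H (n + j) - 2)
      = 2 * ∑ i ∈ Finset.range j, (i : ℝ) / (n + i + 1) := by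
  have h1 : ∀ i ∈ Finset.range j, (i : ℝ) / (n + i + 1)
      = 1 - (n + 1) * (1 / (n + i + 1)) := by
    intro i _
    have h : (n : ℝ) + i + 1 ≠ 0 := by positivity
    field_simp
    ring
  rw [Finset.sum_congr rfl h1, Finset.sum_sub_distrib, Finset.sum_const, ← Finset.mul_sum,
    Finset.card_range]
  simp only [κ, H_add]
  push_cast
  ring

lemma tendsto_g (j : ℕ) :
    Filter.Tendsto (fun m : ℕ => κ (m - j) - κ m + j * (2 * H m - 2))
      Filter.atTop (𝓝 0) := by
  have hden : ∀ i : ℕ, Filter.Tendsto (fun m : ℕ => ((m - j : ℕ) : ℝ) + i + 1)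
      Filter.atTop Filter.atTop := by
    intro i
    apply tendsto_atTop_add_const_right
    apply tendsto_atTop_add_const_right
    exact tendsto_natCast_atTop_atTop.comp (tendsto_sub_atTop_nat j)
  have h2 : Filter.Tendsto
      (fun m : ℕ => 2 * ∑ i ∈ Finset.range j, (i : ℝ) / ((m - j : ℕ) + i + 1))
      Filter.atTop (𝓝 0) := by
    have : Filter.Tendsto
        (fun m : ℕ => ∑ i ∈ Finset.range j, (i : ℝ) / ((m - j : ℕ) + i + 1))
        Filter.atTop (𝓝 (∑ i ∈ Finset.range j, (0 : ℝ))) := by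
      refine tendsto_finset_sum _ fun i _ => ?_
      exact Filter.Tendsto.div_atTop tendsto_const_nhds (hden i)
    simpa using this.const_mul 2
  refine h2.congr' ?_
  filter_upwards [Filter.eventually_ge_atTop j] with m hm
  have hmj : m - j + j = m := Nat.sub_add_cancel hm
  have := key (m - j) j
  rw [hmj] at this
  exact this.symm

lemma hsum (b m : ℕ) :
    ∑ j ∈ Finset.Icc 1 b, κ (m - j) * c b j
      = ∑ j ∈ Finset.Icc 1 b, (κ (m - j) - κ m + j * (2 * H m - 2)) * c b j := by
  have hz : ∑ j ∈ Finset.Icc 1 b, (κ m - (j : ℝ) * (2 * H m - 2)) * c b j = 0 := by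
    have e : ∀ j ∈ Finset.Icc 1 b, (κ m - (j : ℝ) * (2 * H m - 2)) * c b j
        = κ m * c b j - (2 * H m - 2) * ((j : ℝ) * c b j) := fun j _ => by ring
    rw [Finset.sum_congr rfl e, Finset.sum_sub_distrib, ← Finset.mul_sum, ← Finset.mul_sum,
      sum_c, sum_jc]
    ring
  have e2 : ∀ j ∈ Finset.Icc 1 b, (κ (m - j) - κ m + j * (2 * H m - 2)) * c b j
      = κ (m - j) * c b j - (κ m - (j : ℝ) * (2 * H m - 2)) * c b j := fun j _ => by ring
  rw [Finset.sum_congr rfl e2, Finset.sum_sub_distrib, hz, sub_zero]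

theorem kappa_sum_tendsto_zero (b : ℕ) :
    Filter.Tendsto
      (fun m : ℕ => ∑ j ∈ Finset.Icc 1 b,
        κ (m - j) * ((b : ℝ) - 1 + κ (j - 1) + κ (b - j) - κ b))
      Filter.atTop (𝓝 0) := by
  show Filter.Tendsto (fun m : ℕ => ∑ j ∈ Finset.Icc 1 b, κ (m - j) * c b j)
      Filter.atTop (𝓝 0)
  have h : Filter.Tendsto
      (fun m : ℕ => ∑ j ∈ Finset.Icc 1 b, (κ (m - j) - κ m + j * (2 * H m - 2)) * c b j)
      Filter.atTop (𝓝 (∑ j ∈ Finset.Icc 1 b, (0 : ℝ) * c b j)) :=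
    tendsto_finset_sum _ fun j _ => (tendsto_g j).mul_const (c b j)
  simp only [zero_mul, Finset.sum_const_zero] at h
  exact h.congr fun m => (hsum b m).symm
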